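/- Infinite-horizon value of the Riccati feedback (Lemma 2, equality part): let P be a symmetric positive semidefinite solution of the DARE with cross term for data (Ã, B̃, Q̃, R̃, Ñ), with gain L. If x : ℕ → ℝⁿ satisfies x(r+1) = (Ã − B̃ L) x(r) for all r and x(r) → 0 as r → ∞, then the series ∑_{r=0}^{∞} c(x(r), −L x(r)) converges and its sum equals x(0)ᵀ P x(0). -/

import Mathlib

open Matrix Filter

private theorem dot_trans' {a b : ℕ} (A : Matrix (Fin a) (Fin b) ℝ) (v : Fin b → ℝ)
    (w : Fin a → ℝ) : v ⬝ᵥ (Aᵀ *ᵥ w) = (A *ᵥ v) ⬝ᵥ w := by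
  rw [Matrix.mulVec_transpose, dotProduct_comm, ← Matrix.dotProduct_mulVec, dotProduct_comm]

/-- infinite-horizon value of the Riccati feedback (Lemma 2,
equality part). Along the closed-loop trajectory x(r+1) = (Ã - B̃L)x(r)
converging to zero, the partial sums of the stage costs under u = -Lx
converge to x(0)ᵀ P x(0). -/
theorem riccati_feedback_infinite_horizon_value {n m : ℕ}
    (At : Matrix (Fin n) (Fin n) ℝ) (Bt : Matrix (Fin n) (Fin m) ℝ)
    (Qt : Matrix (Fin n) (Fin n) ℝ) (Rt : Matrix (Fin m) (Fin m) ℝ)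
    (Nt : Matrix (Fin n) (Fin m) ℝ)
    (hQt : Qt.IsSymm) (hRt : Rt.IsSymm)
    (P : Matrix (Fin n) (Fin n) ℝ)
    (hP : P.PosSemidef)
    (hpd : (Rt + Btᵀ * P * Bt).PosDef)
    (L : Matrix (Fin m) (Fin n) ℝ)
    (hL : L = (Rt + Btᵀ * P * Bt)⁻¹ * (Atᵀ * P * Bt + Nt)ᵀ)
    (hdare : P = Qt + Atᵀ * P * At - (Atᵀ * P * Bt + Nt) * L)
    (c : (Fin n → ℝ) → (Fin m → ℝ) → ℝ)
    (hc : ∀ x u, c x u = x ⬝ᵥ (Qt *ᵥ x) + u ⬝ᵥ (Rt *ᵥ u) + 2 * (x ⬝ᵥ (Nt *ᵥ u)))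
    (x : ℕ → Fin n → ℝ)
    (hx : ∀ r, x (r + 1) = (At - Bt * L) *ᵥ x r)
    (hlim : Tendsto x atTop (nhds 0)) :
    Tendsto (fun N => ∑ r ∈ Finset.range N, c (x r) (-(L *ᵥ x r))) atTop
      (nhds (x 0 ⬝ᵥ (P *ᵥ x 0))) := by
  have hPs : Pᵀ = P := by
    have := hP.isHermitian
    simpa [Matrix.IsHermitian] using this
  have hSL : (Rt + Btᵀ * P * Bt) * L = Btᵀ * P * At + Ntᵀ := by
    rw [hL, ← Matrix.mul_assoc,
      Matrix.mul_nonsing_inv _ ((Matrix.isUnit_iff_isUnit_det _).mp hpd.isUnit), Matrix.one_mul]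
    simp [Matrix.transpose_add, Matrix.transpose_mul, hPs, Matrix.mul_assoc]
  have Mkey : Qt + Lᵀ * Rt * L - Nt * L - Lᵀ * Ntᵀ
      + (At - Bt * L)ᵀ * P * (At - Bt * L) = P := by
    have expand : Qt + Lᵀ * Rt * L - Nt * L - Lᵀ * Ntᵀ
        + (At - Bt * L)ᵀ * P * (At - Bt * L)
        = Qt + Atᵀ * P * At - (Atᵀ * P * Bt + Nt) * L
          + (Lᵀ * ((Rt + Btᵀ * P * Bt) * L) - Lᵀ * (Btᵀ * P * At + Ntᵀ)) := by
      simp only [Matrix.transpose_sub, Matrix.transpose_mul, hPs, Matrix.add_mul,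
        Matrix.mul_add, Matrix.sub_mul, Matrix.mul_sub, Matrix.mul_assoc]
      abel
    rw [expand, hSL, sub_self, add_zero, ← hdare]
  -- per-step telescoping identity
  have key : ∀ r, c (x r) (-(L *ᵥ x r))
      = x r ⬝ᵥ (P *ᵥ x r) - x (r + 1) ⬝ᵥ (P *ᵥ x (r + 1)) := by
    intro r
    rw [hc, hx r]
    set v := x r
    have hMv := congrArg (fun M => v ⬝ᵥ (M *ᵥ v)) Mkey
    simp only [Matrix.add_mulVec, Matrix.sub_mulVec, dotProduct_add, dotProduct_sub,
      ← Matrix.mulVec_mulVec, dot_trans', dotProduct_neg, neg_dotProduct, neg_neg,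
      Matrix.mulVec_neg] at hMv ⊢
    have hcomm : (Nt *ᵥ (L *ᵥ v)) ⬝ᵥ v = v ⬝ᵥ (Nt *ᵥ (L *ᵥ v)) := dotProduct_comm _ _
    linarith [hMv, hcomm]
  have hsum : ∀ N, ∑ r ∈ Finset.range N, c (x r) (-(L *ᵥ x r))
      = x 0 ⬝ᵥ (P *ᵥ x 0) - x N ⬝ᵥ (P *ᵥ x N) := by
    intro N
    simp only [key]
    exact Finset.sum_range_sub' (fun r => x r ⬝ᵥ (P *ᵥ x r)) N
  simp only [hsum]
  have hcont : Continuous fun v : Fin n → ℝ => v ⬝ᵥ (P *ᵥ v) := by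
    simp only [dotProduct, Matrix.mulVec]
    fun_prop
  have hzero : Tendsto (fun N => x N ⬝ᵥ (P *ᵥ x N)) atTop (nhds 0) := by
    have := (hcont.tendsto 0).comp hlim
    simpa [Function.comp_def] using this
  simpa using (tendsto_const_nhds.sub hzero)
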